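/- arXiv:2105.12561 — 2 statements merged into one kernel-verified Lean document; each statement's English description precedes it below -/
import Mathlib

section
/- Let $E/F$ be a separable quadratic extension and $B = E \oplus Ej$ a quaternion algebra with $j^2 = \epsilon$. The map $\mathrm{inv}(a+bj) = \epsilon\,\mathrm{Nm}(b)/\mathrm{Nm}(a)$ induces a bijection from the double coset space $E^\times \backslash B^\times / E^\times$ (for the action $(h_1,h_2)\cdot \gamma = h_1^{-1}\gamma h_2$) onto $(\epsilon\,\mathrm{Nm}(E^\times) \setminus \{1\}) \cup \{0,\infty\}$, where the invariant is $0$ when $b = 0$ and $\infty$ when $a = 0$. -/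
attribute [local instance] Classical.propDecidable

/-- for the quaternion algebra `B = E ⊕ Ej` (elements written as pairs
`(a, b)` meaning `a + bj`, with `j² = ε`), the invariant `inv(a + bj) = ε Nm(b)/Nm(a)`
(with value `0` when `b = 0` and `∞ = none` when `a = 0`) induces a bijection from the
double coset space `E^×\B^×/E^×` for the action `(h₁,h₂)·γ = h₁⁻¹ γ h₂` onto
`(ε Nm(E^×) ∖ {1}) ∪ {0, ∞}`. -/
theorem stmt2 {F E : Type*} [Field F] [Field E] [Algebra F E]
    (σ : E ≃ₐ[F] E) (hσ2 : ∀ x, σ (σ x) = x) (hσne : ∃ x, σ x ≠ x)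
    (hfix : ∀ x : E, σ x = x ↔ ∃ y : F, algebraMap F E y = x)
    (Nm : E → E) (hNm : ∀ x, Nm x = x * σ x)
    (ε : F) (hε : ε ≠ 0)
    (Bunits : Set (E × E))
    (hB : Bunits = {g : E × E | Nm g.1 - algebraMap F E ε * Nm g.2 ≠ 0})
    (rel : (E × E) → (E × E) → Prop)
    (hrel : ∀ g g', rel g g' ↔ ∃ h₁ h₂ : Eˣ,
        g'.1 = (h₁ : E)⁻¹ * g.1 * (h₂ : E) ∧ g'.2 = (h₁ : E)⁻¹ * g.2 * σ (h₂ : E))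
    (invar : E × E → Option E)
    (hinvar : ∀ g, invar g = if g.1 = 0 then none
        else some (algebraMap F E ε * Nm g.2 / Nm g.1)) :
    (∀ g ∈ Bunits, ∀ g' ∈ Bunits, (rel g g' ↔ invar g = invar g')) ∧
    (∀ g ∈ Bunits, ∀ x : E, invar g = some x →
        x = 0 ∨ (x ≠ 1 ∧ ∃ c : E, c ≠ 0 ∧ x = algebraMap F E ε * Nm c)) ∧
    (∀ c : E, c ≠ 0 → algebraMap F E ε * Nm c ≠ 1 →
        ∃ g ∈ Bunits, invar g = some (algebraMap F E ε * Nm c)) ∧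
    (∃ g ∈ Bunits, invar g = some 0) ∧
    (∃ g ∈ Bunits, invar g = none) := by
  have hεE : algebraMap F E ε ≠ 0 := fun h => hε ((algebraMap F E).injective (by simpa using h))
  set εE := algebraMap F E ε with hεEdef
  have hσ0 : ∀ x : E, σ x = 0 ↔ x = 0 := fun x => by
    constructor
    · intro h; have := hσ2 x; rw [h, map_zero] at this; exact this.symm
    · rintro rfl; exact map_zero σ
  have hNm0 : ∀ x : E, Nm x = 0 ↔ x = 0 := fun x => by
    rw [hNm, mul_eq_zero, hσ0, or_self]
  have hNmmul : ∀ x y : E, Nm (x * y) = Nm x * Nm y := fun x y => by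
    rw [hNm, hNm, hNm, map_mul]; ring
  have hNmσ : ∀ x : E, Nm (σ x) = Nm x := fun x => by
    rw [hNm, hNm, hσ2]; ring
  have hNminv : ∀ x : E, Nm x⁻¹ = (Nm x)⁻¹ := fun x => by
    rw [hNm, hNm, map_inv₀, mul_inv]
  have hNm1 : Nm 1 = 1 := by rw [hNm, map_one, mul_one]
  have hNm0' : Nm (0 : E) = 0 := (hNm0 0).2 rfl
  have h90 : ∀ t : E, t * σ t = 1 → ∃ h : E, h ≠ 0 ∧ σ h = t * h := by
    intro t ht
    by_cases hc : 1 + σ t = 0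
    · obtain ⟨x, hx⟩ := hσne
      have ht1 : t = -1 := by
        have hst : σ t = -1 := by linear_combination hc
        have h2 := hσ2 t
        rw [hst, map_neg, map_one] at h2
        exact h2.symm
      refine ⟨x - σ x, sub_ne_zero.2 (fun h => hx h.symm), ?_⟩
      rw [map_sub, hσ2, ht1]; ring
    · refine ⟨1 + σ t, hc, ?_⟩
      rw [map_add, map_one, hσ2, mul_add, mul_one, ht, add_comm]
  refine ⟨?_, ?_, ?_, ?_, ?_⟩
  · -- part 1
    intro g hg g' hg'
    rw [hB] at hg hg'
    constructor
    · intro hr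
      obtain ⟨h₁, h₂, h1, h2⟩ := (hrel g g').1 hr
      have hN1 : Nm (h₁ : E) ≠ 0 := fun h => h₁.ne_zero ((hNm0 _).1 h)
      have hN2 : Nm (h₂ : E) ≠ 0 := fun h => h₂.ne_zero ((hNm0 _).1 h)
      rw [hinvar, hinvar]
      by_cases ha : g.1 = 0
      · rw [if_pos ha, if_pos (by rw [h1, ha]; ring)]
      · have ha' : g'.1 ≠ 0 := by
          rw [h1]
          exact mul_ne_zero (mul_ne_zero (inv_ne_zero h₁.ne_zero) ha) h₂.ne_zero
        rw [if_neg ha, if_neg ha']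
        have hNa : Nm g.1 ≠ 0 := fun h => ha ((hNm0 _).1 h)
        congr 1
        rw [h1, h2, hNmmul, hNmmul, hNmmul, hNmmul, hNminv, hNmσ]
        field_simp
    · intro heq
      rw [hinvar, hinvar] at heq
      rw [hrel]
      by_cases ha : g.1 = 0
      · have ha' : g'.1 = 0 := by
          by_contra ha'
          rw [if_pos ha, if_neg ha'] at heq
          cases heq
        have hb : g.2 ≠ 0 := by
          intro h
          apply hg
          rw [ha, h, hNm0']; ring
        have hb' : g'.2 ≠ 0 := by
          intro h
          apply hg'
          rw [ha', h, hNm0']; ring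
        refine ⟨Units.mk0 (g.2 * g'.2⁻¹) (mul_ne_zero hb (inv_ne_zero hb')), 1, ?_, ?_⟩
        · rw [ha', ha]; simp
        · simp only [Units.val_mk0, Units.val_one, map_one, mul_one]
          field_simp
      · have ha' : g'.1 ≠ 0 := by
          intro ha'
          rw [if_pos ha', if_neg ha] at heq
          cases heq
        rw [if_neg ha, if_neg ha'] at heq
        have hNa : Nm g.1 ≠ 0 := fun h => ha ((hNm0 _).1 h)
        have hNa' : Nm g'.1 ≠ 0 := fun h => ha' ((hNm0 _).1 h)
        have heq' : εE * Nm g.2 / Nm g.1 = εE * Nm g'.2 / Nm g'.1 := Option.some.inj heq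
        have hcross : Nm g.2 * Nm g'.1 = Nm g'.2 * Nm g.1 := by
          field_simp at heq'
          have h2 : Nm g.2 * Nm g'.1 * εE = Nm g'.2 * Nm g.1 * εE := by
            linear_combination εE * heq'
          exact mul_right_cancel₀ hεE h2
        by_cases hb : g.2 = 0
        · have hb' : g'.2 = 0 := by
            rw [hb, hNm0', zero_mul] at hcross
            have : Nm g'.2 = 0 := by
              rcases mul_eq_zero.1 hcross.symm with h | h
              · exact h
              · exact absurd h hNa
            exact (hNm0 _).1 this
          refine ⟨1, Units.mk0 (g.1⁻¹ * g'.1) (mul_ne_zero (inv_ne_zero ha) ha'), ?_, ?_⟩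
          · simp only [Units.val_one, inv_one, one_mul, Units.val_mk0]
            field_simp
          · rw [hb, hb']; ring
        · have hb' : g'.2 ≠ 0 := by
            intro h
            rw [h, hNm0', zero_mul] at hcross
            rcases mul_eq_zero.1 hcross with h2 | h2
            · exact hb ((hNm0 _).1 h2)
            · exact hNa' h2
          have hσa : σ g.1 ≠ 0 := fun h => ha ((hσ0 _).1 h)
          have hσa' : σ g'.1 ≠ 0 := fun h => ha' ((hσ0 _).1 h)
          have hσb : σ g.2 ≠ 0 := fun h => hb ((hσ0 _).1 h)
          have hσb' : σ g'.2 ≠ 0 := fun h => hb' ((hσ0 _).1 h)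
          set t : E := σ g.1 * g'.2 / (g.2 * σ g'.1) with htdef
          have hNt : t * σ t = 1 := by
            have hσt : σ t = σ (σ g.1) * σ g'.2 / (σ g.2 * σ (σ g'.1)) := by
              rw [htdef, map_div₀, map_mul, map_mul]
            rw [htdef, hσt, hσ2, hσ2]
            have hc2 : g.2 * σ g.2 * (g'.1 * σ g'.1) = g'.2 * σ g'.2 * (g.1 * σ g.1) := by
              have := hcross
              rw [hNm, hNm, hNm, hNm] at this
              linear_combination this
            field_simp
            linear_combination -hc2
          obtain ⟨h, hh0, hσh⟩ := h90 t hNt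
          refine ⟨Units.mk0 h hh0, Units.mk0 (g.1⁻¹ * h * g'.1)
            (mul_ne_zero (mul_ne_zero (inv_ne_zero ha) hh0) ha'), ?_, ?_⟩
          · simp only [Units.val_mk0]
            field_simp
          · simp only [Units.val_mk0, map_mul, map_inv₀, hσh, htdef]
            field_simp
  · -- part 2
    intro g hg x hx
    rw [hinvar] at hx
    rw [hB] at hg
    by_cases ha : g.1 = 0
    · rw [if_pos ha] at hx; cases hx
    rw [if_neg ha] at hx
    have hx' : x = εE * Nm g.2 / Nm g.1 := (Option.some.inj hx).symm
    have hNa : Nm g.1 ≠ 0 := fun h => ha ((hNm0 _).1 h)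
    by_cases hb : g.2 = 0
    · left; rw [hx', hb, hNm0']; simp
    · right
      constructor
      · intro hx1
        apply hg
        rw [hx1] at hx'
        field_simp at hx'
        linear_combination hx'
      · refine ⟨g.2 / g.1, div_ne_zero hb ha, ?_⟩
        rw [hx']
        rw [div_eq_mul_inv g.2, hNmmul, hNminv]
        field_simp
  · -- part 3
    intro c hc h1
    refine ⟨(1, c), ?_, ?_⟩
    · rw [hB]
      simp only [Set.mem_setOf_eq, hNm1]
      intro h
      apply h1
      have : εE * Nm c = 1 := by linear_combination -h
      exact this
    · rw [hinvar]
      rw [if_neg (one_ne_zero), hNm1, div_one]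
  · -- part 4
    refine ⟨(1, 0), ?_, ?_⟩
    · rw [hB]
      simp only [Set.mem_setOf_eq, hNm1, hNm0']
      intro h
      apply (one_ne_zero : (1:E) ≠ 0)
      linear_combination h
    · rw [hinvar, if_neg (one_ne_zero), hNm0', hNm1]
      simp
  · -- part 5
    refine ⟨(0, 1), ?_, ?_⟩
    · rw [hB]
      simp only [Set.mem_setOf_eq, hNm1, hNm0']
      intro h
      apply hεE
      linear_combination -h
    · rw [hinvar, if_pos rfl]
end

section
/- Let $F$ be a local field, $E/F$ a separable quadratic field extension, and $G \cdot w \subset \mathcal{V}$ the orbit of $w = \begin{pmatrix}0 & 1\\ 1 & 0\end{pmatrix}$ under the action $g \cdot s = g s \bar g^t$ of $G = \mathrm{GL}_2(E)$ on invertible Hermitian matrices. Then the invariant map $\mathrm{Inv}\begin{pmatrix}a & b \\ \bar b & d\end{pmatrix} = ad/(b\bar b)$ restricted to the regular part $(G\cdot w) \cap \mathcal{V}_{\mathrm{reg}}$ realizes it as a trivializable principal $E^\times \times F^\times$-bundle (for the action $(a,z)\cdot s = \mathrm{diag}(a,1)\,s\,\mathrm{diag}(\bar a,1)z$) over $(1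 - \mathrm{Nm}(E^\times)) \setminus \{0\}$; in particular the action of $E^\times \times F^\times$ on each fiber is simply transitive and $\mathrm{Inv}(G\cdot w) = (1 - \mathrm{Nm}(E^\times)) \cup \{\infty\}$. -/
open Matrix


private lemma entry_formula {E : Type*} [Field E] (σ : E → E) (g : Matrix (Fin 2) (Fin 2) E)
    (i j : Fin 2) :
    (g * !![(0:E),1;1,0] * (g.map σ)ᵀ) i j = g i 0 * σ (g j 1) + g i 1 * σ (g j 0) := by
  simp [Matrix.mul_apply, Fin.sum_univ_two, Matrix.map_apply]
  ring

private lemma inv_formula {F E : Type*} [Field F] [Field E] [Algebra F E]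
    (σ : E ≃ₐ[F] E) (hσ2 : ∀ x, σ (σ x) = x)
    (g : Matrix (Fin 2) (Fin 2) E)
    (s : Matrix (Fin 2) (Fin 2) E)
    (hs : s = g * !![(0:E),1;1,0] * (g.map ⇑σ)ᵀ) (hb : s 0 1 ≠ 0) :
    s 0 0 * s 1 1 / (s 0 1 * σ (s 0 1)) = 1 - (g.det / s 0 1) * σ (g.det / s 0 1) := by
  have hb' : σ (s 0 1) ≠ 0 := fun h => hb (σ.injective (by simp [h]))
  have e00 : s 0 0 = g 0 0 * σ (g 0 1) + g 0 1 * σ (g 0 0) := hs ▸ entry_formula σ g 0 0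
  have e01 : s 0 1 = g 0 0 * σ (g 1 1) + g 0 1 * σ (g 1 0) := hs ▸ entry_formula σ g 0 1
  have e11 : s 1 1 = g 1 0 * σ (g 1 1) + g 1 1 * σ (g 1 0) := hs ▸ entry_formula σ g 1 1
  have key : s 0 0 * s 1 1 - s 0 1 * σ (s 0 1) = -(g.det * σ g.det) := by
    rw [Matrix.det_fin_two, e00, e01, e11]
    simp only [map_add, _root_.map_mul, map_sub, hσ2]
    ring
  rw [map_div₀, div_mul_div_comm]
  field_simp
  linear_combination key

private lemma herm_formula {F E : Type*} [Field F] [Field E] [Algebra F E]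
    (σ : E ≃ₐ[F] E) (hσ2 : ∀ x, σ (σ x) = x)
    (g : Matrix (Fin 2) (Fin 2) E)
    (s : Matrix (Fin 2) (Fin 2) E)
    (hs : s = g * !![(0:E),1;1,0] * (g.map ⇑σ)ᵀ) :
    s 1 0 = σ (s 0 1) ∧ σ (s 0 0) = s 0 0 ∧ σ (s 1 1) = s 1 1 := by
  have e00 : s 0 0 = g 0 0 * σ (g 0 1) + g 0 1 * σ (g 0 0) := hs ▸ entry_formula σ g 0 0
  have e01 : s 0 1 = g 0 0 * σ (g 1 1) + g 0 1 * σ (g 1 0) := hs ▸ entry_formula σ g 0 1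
  have e10 : s 1 0 = g 1 0 * σ (g 0 1) + g 1 1 * σ (g 0 0) := hs ▸ entry_formula σ g 1 0
  have e11 : s 1 1 = g 1 0 * σ (g 1 1) + g 1 1 * σ (g 1 0) := hs ▸ entry_formula σ g 1 1
  refine ⟨?_, ?_, ?_⟩
  · rw [e10, e01]; simp only [map_add, _root_.map_mul, hσ2]; ring
  · rw [e00]; simp only [map_add, _root_.map_mul, hσ2]; ring
  · rw [e11]; simp only [map_add, _root_.map_mul, hσ2]; ring

/-- the invariant map realizes the regular part of the orbit `G·w` of
`w = (0 1; 1 0)` under `g·s = g s ḡᵗ`, `G = GL₂(E)`, as a trivial `E^× × F^×`-bundle over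
`(1 - Nm(E^×)) ∖ {0}`: the invariant of a regular element of the orbit lies in
`1 - Nm(E^×)`, every value in `(1 - Nm(E^×)) ∖ {0}` (as well as `0` and `∞`) is attained,
and the `E^× × F^×`-action is simply transitive on each fiber over
`(1 - Nm(E^×)) ∖ {0}`; in particular `Inv(G·w) = (1 - Nm(E^×)) ∪ {∞}`. -/
theorem stmt18 {F E : Type*} [Field F] [Field E] [Algebra F E]
    (σ : E ≃ₐ[F] E) (hσ2 : ∀ x, σ (σ x) = x) (hσne : ∃ x, σ x ≠ x)
    (hfix : ∀ x : E, σ x = x ↔ ∃ y : F, algebraMap F E y = x)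
    (w : Matrix (Fin 2) (Fin 2) E) (hw : w = !![0, 1; 1, 0])
    (orb : Set (Matrix (Fin 2) (Fin 2) E))
    (horb : orb = {s | ∃ g : Matrix (Fin 2) (Fin 2) E, g.det ≠ 0 ∧
        s = g * w * (g.map ⇑σ)ᵀ}) :
    -- the invariant of a regular element of the orbit lies in `1 - Nm(E^×)`
    (∀ s ∈ orb, s 0 1 ≠ 0 →
      ∃ c : E, c ≠ 0 ∧ s 0 0 * s 1 1 / (s 0 1 * σ (s 0 1)) = 1 - c * σ c) ∧
    -- every value `1 - Nm(c)` is attained, as is `∞` (i.e. `b = 0`)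
    (∀ c : E, c ≠ 0 → ∃ s ∈ orb, s 0 1 ≠ 0 ∧
      s 0 0 * s 1 1 / (s 0 1 * σ (s 0 1)) = 1 - c * σ c) ∧
    (∃ s ∈ orb, s 0 1 = 0) ∧
    -- simple transitivity of `E^× × F^×` on fibers over `(1 - Nm(E^×)) ∖ {0}`
    (∀ s ∈ orb, ∀ t ∈ orb, s 0 1 ≠ 0 → t 0 1 ≠ 0 →
      s 0 0 * s 1 1 / (s 0 1 * σ (s 0 1)) = t 0 0 * t 1 1 / (t 0 1 * σ (t 0 1)) →
      s 0 0 * s 1 1 ≠ 0 →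
      ∃! az : Eˣ × Fˣ,
        t = algebraMap F E (az.2 : F) •
          (diagonal ![(az.1 : E), 1] * s * diagonal ![σ (az.1 : E), 1])) := by
  subst hw horb
  obtain ⟨δ, hδ⟩ := hσne
  have hu : ∃ u : E, u + σ u ≠ 0 := by
    by_cases h2 : (2 : E) = 0
    · refine ⟨δ, fun h => hδ ?_⟩
      have hdd : δ + δ = 0 := by rw [← two_mul, h2, zero_mul]
      linear_combination h - hdd
    · exact ⟨1, by rw [_root_.map_one, one_add_one_eq_two]; exact h2⟩
  obtain ⟨u, hune⟩ := hu
  refine ⟨?_, ?_, ?_, ?_⟩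
  · -- part 1
    rintro s ⟨g, hg, hs⟩ hb
    refine ⟨g.det / s 0 1, div_ne_zero hg hb, inv_formula σ hσ2 g s hs hb⟩
  · -- part 2
    intro c hc
    by_cases hc1 : c * σ c = 1
    · refine ⟨!![0,1;1,0], ⟨1, by simp, by simp [Matrix.map_one]⟩, by norm_num, ?_⟩
      rw [hc1]
      norm_num
    · have h1c : (1 : E) - c ≠ 0 := sub_ne_zero.mpr (fun h => hc1 (by rw [← h, _root_.map_one, mul_one]))
      set x : E := (u + c * σ u) / (1 - c) with hx
      set g : Matrix (Fin 2) (Fin 2) E := !![x, 1; u, 1] with hgdef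
      have hdet : g.det = c * ((u + σ u) / (1 - c)) := by
        rw [hgdef, Matrix.det_fin_two_of, hx]
        field_simp
        ring
      have hdne : g.det ≠ 0 := by
        rw [hdet]
        exact mul_ne_zero hc (div_ne_zero hune h1c)
      set s : Matrix (Fin 2) (Fin 2) E := g * !![0,1;1,0] * (g.map ⇑σ)ᵀ with hsdef
      have hb : s 0 1 = (u + σ u) / (1 - c) := by
        rw [hsdef, entry_formula, hgdef]
        show x * σ 1 + 1 * σ u = _
        rw [_root_.map_one, hx]
        field_simp
        ring
      have hbne : s 0 1 ≠ 0 := by rw [hb]; exact div_ne_zero hune h1c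
      refine ⟨s, ⟨g, hdne, rfl⟩, hbne, ?_⟩
      rw [inv_formula σ hσ2 g s rfl hbne]
      have : g.det / s 0 1 = c := by
        rw [hdet, hb, mul_div_assoc]
        rw [div_self (div_ne_zero hune h1c), mul_one]
      rw [this]
  · -- part 3
    refine ⟨!![1, -σ u; 1, u] * !![0,1;1,0] * ((!![1, -σ u; 1, u]).map ⇑σ)ᵀ,
      ⟨!![1, -σ u; 1, u], ?_, rfl⟩, ?_⟩
    · rw [Matrix.det_fin_two_of]
      simpa using hune
    · rw [entry_formula]
      simp [hσ2]
  · -- part 4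
    rintro s ⟨gs, hgs, hse⟩ t ⟨gt, hgt, hte⟩ hsb htb hinv hsad
    obtain ⟨Hs10, Hs00, Hs11⟩ := herm_formula σ hσ2 gs s hse
    obtain ⟨Ht10, Ht00, Ht11⟩ := herm_formula σ hσ2 gt t hte
    have hs00 : s 0 0 ≠ 0 := left_ne_zero_of_mul hsad
    have hs11 : s 1 1 ≠ 0 := right_ne_zero_of_mul hsad
    have hsb' : σ (s 0 1) ≠ 0 := fun h => hsb (σ.injective (by simp [h]))
    have htb' : σ (t 0 1) ≠ 0 := fun h => htb (σ.injective (by simp [h]))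
    have htad : t 0 0 * t 1 1 ≠ 0 := by
      intro h
      have hne : s 0 0 * s 1 1 / (s 0 1 * σ (s 0 1)) ≠ 0 :=
        div_ne_zero hsad (mul_ne_zero hsb hsb')
      rw [hinv] at hne
      exact hne (by rw [h, zero_div])
    have ht00 : t 0 0 ≠ 0 := left_ne_zero_of_mul htad
    have ht11 : t 1 1 ≠ 0 := right_ne_zero_of_mul htad
    obtain ⟨ys, hys⟩ := (hfix (s 1 1)).mp Hs11
    obtain ⟨yt, hyt⟩ := (hfix (t 1 1)).mp Ht11
    have hysne : ys ≠ 0 := fun h => hs11 (by rw [← hys, h, map_zero])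
    have hytne : yt ≠ 0 := fun h => ht11 (by rw [← hyt, h, map_zero])
    have ha : t 0 1 * s 1 1 / (t 1 1 * s 0 1) ≠ 0 :=
      div_ne_zero (mul_ne_zero htb hs11) (mul_ne_zero ht11 hsb)
    have hz : algebraMap F E (yt / ys) = t 1 1 / s 1 1 := by rw [map_div₀, hys, hyt]
    have hcross : s 0 0 * s 1 1 * (t 0 1 * σ (t 0 1)) = t 0 0 * t 1 1 * (s 0 1 * σ (s 0 1)) := by
      field_simp at hinv
      linear_combination hinv
    have hσa : σ (t 0 1 * s 1 1 / (t 1 1 * s 0 1)) = σ (t 0 1) * s 1 1 / (t 1 1 * σ (s 0 1)) := by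
      rw [map_div₀, _root_.map_mul, _root_.map_mul, Hs11, Ht11]
    have hentry : ∀ (b : E) (i j : Fin 2),
        (diagonal ![b, 1] * s * diagonal ![σ b, 1]) i j
          = ![b, (1:E)] i * s i j * ![σ b, (1:E)] j := by
      intro b i j
      rw [Matrix.mul_diagonal, Matrix.diagonal_mul]
    refine ⟨⟨Units.mk0 _ ha, Units.mk0 (yt / ys) (div_ne_zero hytne hysne)⟩, ?_, ?_⟩
    · show t = algebraMap F E (yt / ys) • _
      ext i j
      rw [Matrix.smul_apply, hentry, smul_eq_mul, hz]
      fin_cases i <;> fin_cases j <;>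
        simp only [Matrix.cons_val_zero, Matrix.cons_val_one, Matrix.head_cons,
          Fin.zero_eta, Fin.mk_one, Units.val_mk0]
      · rw [hσa]
        field_simp
        linear_combination -hcross
      · field_simp
      · rw [hσa, Ht10, Hs10]
        field_simp
      · field_simp
    · rintro ⟨a', z'⟩ heq
      simp only at heq
      have h11 := congrFun (congrFun heq 1) 1
      rw [Matrix.smul_apply, hentry, smul_eq_mul] at h11
      simp only [Matrix.cons_val_one, Matrix.head_cons, Matrix.cons_val_zero] at h11
      rw [one_mul, mul_one] at h11
      have hz' : algebraMap F E (z' : F) = t 1 1 / s 1 1 := by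
        rw [eq_div_iff hs11]; exact h11.symm
      have hzval : (z' : F) = yt / ys := by
        apply (algebraMap F E).injective
        rw [hz, hz']
      have h01 := congrFun (congrFun heq 0) 1
      rw [Matrix.smul_apply, hentry, smul_eq_mul] at h01
      simp only [Matrix.cons_val_zero, Matrix.cons_val_one, Matrix.head_cons] at h01
      rw [mul_one] at h01
      have haval : (a' : E) = t 0 1 * s 1 1 / (t 1 1 * s 0 1) := by
        rw [hz'] at h01
        field_simp at h01 ⊢
        linear_combination -h01
      ext
      · exact haval
      · exact hzval
end
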